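/- Let H be a complex Hilbert space and let B be a quasipoint in the lattice L(H) of closed subspaces of H. Then B contains a nonzero finite-dimensional subspace if and only if there is a (necessarily unique) one-dimensional subspace ℂx (0 ≠ x ∈ H) such that B = {U ∈ L(H) | ℂx ⊆ U}. -/

import Mathlib

/-- The lattice `L(H)` of closed (linear) subspaces of a Hilbert space `H`. -/
def ClosedSubspace (H : Type*) [NormedAddCommGroup H] [InnerProductSpace ℂ H] : Type _ :=
  {U : Submodule ℂ H // IsClosed (U : Set H)}

/-- The zero subspace, as an element of `L(H)`. -/
def zeroCS (H : Type*) [NormedAddCommGroup H] [InnerProductSpace ℂ H] :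
    ClosedSubspace H :=
  ⟨⊥, by rw [Submodule.bot_coe]; exact isClosed_singleton⟩

/-- A quasipoint of `L(H)`: a nonempty set of closed subspaces not containing
the zero subspace, downward directed (for `U, V ∈ B` there is `W ∈ B` with
`W ⊆ U ∩ V`), and maximal among subsets with these properties. -/
def IsQuasipointCS {H : Type*} [NormedAddCommGroup H] [InnerProductSpace ℂ H]
    (B : Set (ClosedSubspace H)) : Prop :=
  B.Nonempty ∧ zeroCS H ∉ B ∧
  (∀ U ∈ B, ∀ V ∈ B, ∃ W ∈ B, W.1 ≤ U.1 ⊓ V.1) ∧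
  ∀ C : Set (ClosedSubspace H), zeroCS H ∉ C →
    (∀ U ∈ C, ∀ V ∈ C, ∃ W ∈ C, W.1 ≤ U.1 ⊓ V.1) → B ⊆ C → B = C

/-- A quasipoint `B` of `L(H)` contains a nonzero finite-dimensional subspace if
and only if there is a (necessarily unique) line `ℂx` (with `x ≠ 0`) such that
`B = {U ∈ L(H) | ℂx ⊆ U}`. -/
theorem stmt3 {H : Type*} [NormedAddCommGroup H] [InnerProductSpace ℂ H]
    [CompleteSpace H] (B : Set (ClosedSubspace H)) (hB : IsQuasipointCS B) :
    (∃ U ∈ B, U.1 ≠ ⊥ ∧ FiniteDimensional ℂ U.1) ↔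
    ∃ x : H, x ≠ 0 ∧
      B = {U : ClosedSubspace H | Submodule.span ℂ {x} ≤ U.1} ∧
      ∀ y : H, y ≠ 0 → B = {U : ClosedSubspace H | Submodule.span ℂ {y} ≤ U.1} →
        Submodule.span ℂ {y} = Submodule.span ℂ {x} := by
  obtain ⟨hne, h0, hdir, hmax⟩ := hB
  constructor
  · rintro ⟨U, hU, hUne, hUfd⟩
    -- find minimal finrank element
    set S : Set ℕ := {n | ∃ W ∈ B, W.1 ≠ ⊥ ∧ ∃ _ : FiniteDimensional ℂ W.1,
        Module.finrank ℂ W.1 = n} with hS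
    have hSne : S.Nonempty := ⟨Module.finrank ℂ U.1, U, hU, hUne, hUfd, rfl⟩
    obtain ⟨n, ⟨W, hW, hWne, hWfd, hWn⟩, hmin⟩ := Nat.lt_wfRel.wf.has_min S hSne
    -- W is below every element of B
    have hWle : ∀ V ∈ B, W.1 ≤ V.1 := by
      intro V hV
      obtain ⟨W', hW', hle⟩ := hdir W hW V hV
      have hle1 : W'.1 ≤ W.1 := hle.trans inf_le_left
      have hW'ne : W'.1 ≠ ⊥ := by
        intro h
        exact h0 (by rwa [show W' = zeroCS H from Subtype.ext h] at hW')
      have hW'fd : FiniteDimensional ℂ W'.1 := Submodule.finiteDimensional_of_le hle1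
      have h1 : Module.finrank ℂ W'.1 ≤ n := hWn ▸ Submodule.finrank_mono hle1
      have h2 : ¬ Module.finrank ℂ W'.1 < n :=
        hmin _ ⟨W', hW', hW'ne, hW'fd, rfl⟩
      have heq : W'.1 = W.1 :=
        Submodule.eq_of_le_of_finrank_eq hle1 (by omega)
      exact heq ▸ (hle.trans inf_le_right)
    obtain ⟨x, hxW, hx0⟩ := Submodule.exists_mem_ne_zero_of_ne_bot hWne
    have key : ∀ z : H, z ≠ 0 → (∀ V ∈ B, z ∈ V.1) →
        B = {V : ClosedSubspace H | Submodule.span ℂ {z} ≤ V.1} := by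
      intro z hz hzB
      apply hmax
      · intro h
        have : z ∈ (⊥ : Submodule ℂ H) := h (Submodule.mem_span_singleton_self z)
        exact hz (by simpa using this)
      · intro U₁ hU₁ V₁ hV₁
        refine ⟨⟨U₁.1 ⊓ V₁.1, U₁.2.inter V₁.2⟩, ?_, le_refl _⟩
        show Submodule.span ℂ {z} ≤ U₁.1 ⊓ V₁.1
        exact le_inf hU₁ hV₁
      · intro V hV
        exact (Submodule.span_singleton_le_iff_mem z V.1).2 (hzB V hV)
    have hBx := key x hx0 fun V hV => hWle V hV hxW
    refine ⟨x, hx0, hBx, ?_⟩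
    intro y hy hBy
    have hxy : Submodule.span ℂ {y} ≤ Submodule.span ℂ {x} := by
      have h1 : (⟨Submodule.span ℂ {x},
          (Submodule.span ℂ {x}).closed_of_finiteDimensional⟩ : ClosedSubspace H) ∈ B := by
        rw [hBx]; exact Set.mem_setOf_eq ▸ le_rfl
      rw [hBy] at h1
      exact h1
    have hyx : Submodule.span ℂ {x} ≤ Submodule.span ℂ {y} := by
      have h1 : (⟨Submodule.span ℂ {y},
          (Submodule.span ℂ {y}).closed_of_finiteDimensional⟩ : ClosedSubspace H) ∈ B := by
        rw [hBy]; exact Set.mem_setOf_eq ▸ le_rfl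
      rw [hBx] at h1
      exact h1
    exact le_antisymm hxy hyx
  · rintro ⟨x, hx0, hBx, -⟩
    refine ⟨⟨Submodule.span ℂ {x},
        (Submodule.span ℂ {x}).closed_of_finiteDimensional⟩, by rw [hBx]; exact Set.mem_setOf_eq ▸ le_rfl, ?_, ?_⟩
    · simpa [Submodule.span_singleton_eq_bot] using hx0
    · infer_instance
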